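/- If a binary sequence c of length n satisfies: (Property 1) every window of length B contains a run of ⌈log k⌉+5 consecutive 1's, and (Property 2) every window of length R contains a subwindow of length 3k+⌈log k⌉+4 in which no run of ⌈log k⌉+5 consecutive 1's starts within its first 3k positions, then consecutive 1-entries of the synchronization vector 1_sync(c) (with sentinels t_0 = 0 and t_{J+1} = n+1) are at distance at most B + R + 1. -/
import Mathlib


/-- There is a run of `⌈log k⌉ + 5` consecutive 1's in `c` starting at (1-based) position `j`. -/
def hasRun (k : ℕ) (c : List Bool) (j : ℕ) : Bool :=
  (List.range (Nat.clog 2 k + 5)).all fun t => c.getD (j + t - 1) false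

/-- The window `(c_{i-3k+1}, …, c_{i+⌈log k⌉+4})` is a synchronization pattern: it lies inside
`c`, ends with `⌈log k⌉ + 5` consecutive 1's (starting at position `i`), and no run of
`⌈log k⌉ + 5` consecutive 1's starts at one of the first `3k - 1` window positions
(i.e. at a position `j` with `i - 3k + 1 ≤ j < i`). -/
def syncAt (k : ℕ) (c : List Bool) (i : ℕ) : Bool :=
  decide (3 * k ≤ i) && decide (i + Nat.clog 2 k + 4 ≤ c.length) && hasRun k c i &&
    ((List.range' (i - 3 * k + 1) (i - (i - 3 * k + 1))).all fun j => !hasRun k c j)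

/-- The synchronization vector of `c`: its `i`-th (1-based) entry is 1 iff a synchronization
pattern occurs at position `i`. -/
def syncVec (k : ℕ) (c : List Bool) : List Bool :=
  (List.range c.length).map fun idx => syncAt k c (idx + 1)

/-- If a binary sequence `c` of length `n` satisfies Property 1 (every window of length `B`
contains a run of `⌈log k⌉+5` ones) and Property 2 (every window of length `R` contains a
subwindow of length `3k+⌈log k⌉+4` in which no run of `⌈log k⌉+5` ones starts within its
first `3k` positions), then consecutive 1-entries of `1_sync(c)`, with sentinels `0` and
`n+1`, are at distance at most `B + R + 1`; i.e. `c` is `k`-dense. -/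
theorem properties_imply_k_dense (n k : ℕ) (hk : 1 ≤ k) (c : List Bool) (hc : c.length = n)
    (B R : ℕ)
    (hB : B = (Nat.clog 2 k + 5) * 2 ^ (Nat.clog 2 k + 9) * Nat.clog 2 n)
    (hR : R = (3 * k + Nat.clog 2 k + 4) * (Nat.clog 2 n + 9 + Nat.clog 2 k))
    (hprop1 : ∀ i, 1 ≤ i → i + B - 1 ≤ n →
      ∃ j ∈ Finset.Icc i (i + B - (Nat.clog 2 k + 5)), hasRun k c j = true)
    (hprop2 : ∀ i, 1 ≤ i → i + R - 1 ≤ n →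
      ∃ j ∈ Finset.Icc i (i + R - (3 * k + Nat.clog 2 k + 4)),
        ∀ m ∈ Finset.Ico j (j + 3 * k), hasRun k c m = false) :
    ∀ a : ℕ,
      (a = 0 ∨ a = n + 1 ∨ (1 ≤ a ∧ (syncVec k c).getD (a - 1) false = true)) →
      a ≤ n →
      ∃ b : ℕ,
        (b = 0 ∨ b = n + 1 ∨ (1 ≤ b ∧ (syncVec k c).getD (b - 1) false = true)) ∧
        a < b ∧ b ≤ a + B + R + 1 := by
  intro a ha han
  by_cases hcase : n + 1 ≤ a + B + R + 1
  · exact ⟨n + 1, Or.inr (Or.inl rfl), by omega, by omega⟩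
  push_neg at hcase
  set L := Nat.clog 2 k with hL
  have hR7 : 7 ≤ 3 * k + L + 4 := by omega
  have hR63 : 63 ≤ R := by
    rw [hR]
    calc (63 : ℕ) = 7 * 9 := rfl
      _ ≤ (3 * k + L + 4) * (Nat.clog 2 n + 9 + L) := Nat.mul_le_mul hR7 (by omega)
  have hn2 : 2 ≤ n := by omega
  have hclogn : 1 ≤ Nat.clog 2 n := Nat.clog_pos (by norm_num) hn2
  have hBge : L + 5 ≤ B := by
    rw [hB]
    calc L + 5 = (L + 5) * 1 * 1 := by ring
      _ ≤ (L + 5) * 2 ^ (L + 9) * Nat.clog 2 n :=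
        Nat.mul_le_mul (Nat.mul_le_mul_left _ Nat.one_le_two_pow) hclogn
  have hRge : 3 * k + L + 4 ≤ R := by
    rw [hR]
    calc 3 * k + L + 4 = (3 * k + L + 4) * 1 := by ring
      _ ≤ (3 * k + L + 4) * (Nat.clog 2 n + 9 + L) := Nat.mul_le_mul_left _ (by omega)
  obtain ⟨j, hjmem, hjfree⟩ := hprop2 (a + 1) (by omega) (by omega)
  rw [Finset.mem_Icc] at hjmem
  have hj2 : j + (3 * k + L + 4) ≤ a + 1 + R := by omega
  obtain ⟨m₀, hm₀mem, hm₀run⟩ := hprop1 j (by omega) (by omega)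
  rw [Finset.mem_Icc] at hm₀mem
  have hm₀2 : m₀ + (L + 5) ≤ j + B := by omega
  have hP : ∃ m, hasRun k c (j + m) = true :=
    ⟨m₀ - j, by rw [Nat.add_sub_cancel' hm₀mem.1]; exact hm₀run⟩
  set f := Nat.find hP with hf
  have hfspec : hasRun k c (j + f) = true := Nat.find_spec hP
  have hfle : f ≤ m₀ - j :=
    Nat.find_le (by rw [Nat.add_sub_cancel' hm₀mem.1]; exact hm₀run)
  have hf3k : 3 * k ≤ f := by
    by_contra h
    push_neg at h
    have hfr := hjfree (j + f) (Finset.mem_Ico.2 ⟨by omega, by omega⟩)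
    rw [hfr] at hfspec
    exact absurd hfspec (by simp)
  set i := j + f with hi
  have hile : i ≤ m₀ := by omega
  refine ⟨i, Or.inr (Or.inr ⟨by omega, ?_⟩), by omega, by omega⟩
  have hin : i ≤ n := by omega
  have h1 : i - 1 < (syncVec k c).length := by
    simp only [syncVec, List.length_map, List.length_range, hc]; omega
  rw [List.getD_eq_getElem _ _ h1]
  simp only [syncVec, List.getElem_map, List.getElem_range]
  have hii : i - 1 + 1 = i := by omega
  rw [hii]
  simp only [syncAt, Bool.and_eq_true, decide_eq_true_eq, List.all_eq_true]
  refine ⟨⟨⟨by omega, by omega⟩, hfspec⟩, ?_⟩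
  intro p hp
  rw [List.mem_range'_1] at hp
  obtain ⟨hp1, hp2⟩ := hp
  have hpj : j ≤ p := by omega
  have hpi : p < i := by omega
  have hmin := Nat.find_min hP (m := p - j) (by omega)
  rw [Nat.add_sub_cancel' hpj] at hmin
  simp only [Bool.not_eq_true] at hmin
  simp [hmin]
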